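/- Fix n ≥ k ≥ 1. If H ⊆ {0,1,...,n} satisfies |h - h'| ≥ k for all distinct h,h' ∈ H, and H maximizes f(H) = Σ_{h∈H} C(n,h) among all such sets, then writing H = {h_1 < h_2 < ... < h_t}, we have h_1 < k, h_{i+1} - h_i = k for all 1 ≤ i < t, and h_t > n - k. -/

import Mathlib

lemma choose_step_aux {n c : ℕ} (h : 2 * c + 2 ≤ n) : n.choose c < n.choose (c + 1) := by
  have he := Nat.choose_succ_right_eq n c
  have hpos : 0 < n.choose c := Nat.choose_pos (by omega)
  have h1 : n.choose c * (c + 1) < n.choose c * (n - c) :=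
    mul_lt_mul_of_pos_left (by omega : c + 1 < n - c) hpos
  have h2 : n.choose c * (c + 1) < n.choose (c + 1) * (c + 1) := by
    calc n.choose c * (c + 1) < n.choose c * (n - c) := h1
      _ = n.choose (c + 1) * (c + 1) := he.symm
  exact lt_of_mul_lt_mul_right h2 (Nat.zero_le _)

lemma choose_le_of_sum_le (n : ℕ) : ∀ d a b : ℕ, a ≤ b → b - a ≤ d → a + b ≤ n →
    n.choose a ≤ n.choose b := by
  intro d
  induction d with
  | zero =>
    intro a b h1 h2 _
    have : a = b := by omega
    exact le_of_eq (by rw [this])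
  | succ d ih =>
    intro a b h1 h2 h3
    rcases eq_or_lt_of_le h1 with rfl | hlt
    · exact le_refl _
    · by_cases hs : a + b = n
      · have hb : b ≤ n := by omega
        have ha : a = n - b := by omega
        rw [ha, Nat.choose_symm hb]
      · have hstep : n.choose a < n.choose (a + 1) := choose_step_aux (by omega)
        exact le_trans (le_of_lt hstep) (ih (a + 1) b hlt (by omega) (by omega))

lemma choose_lt_of_sum_lt (n a b : ℕ) (h1 : a < b) (h2 : a + b < n) :
    n.choose a < n.choose b :=
  lt_of_lt_of_le (choose_step_aux (by omega))
    (choose_le_of_sum_le n (b - (a + 1)) (a + 1) b h1 (le_refl _) (by omega))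

lemma choose_lt_of_lt_sum (n a b : ℕ) (h1 : a < b) (hb : b ≤ n) (h2 : n < a + b) :
    n.choose b < n.choose a := by
  rw [show n.choose b = n.choose (n - b) from (Nat.choose_symm hb).symm]
  exact choose_lt_of_sum_lt n (n - b) a (by omega) (by omega)

lemma abs_dist_of_nat {k a b : ℕ} (h : a + k ≤ b ∨ b + k ≤ a) :
    (k : ℤ) ≤ |(a : ℤ) - (b : ℤ)| := le_abs.mpr (by omega)

lemma nat_of_abs_dist {k a b : ℕ} (h : (k : ℤ) ≤ |(a : ℤ) - (b : ℤ)|) :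
    a + k ≤ b ∨ b + k ≤ a := by
  have := le_abs.mp h
  omega

/-- If `H ⊆ {0,…,n}` has pairwise distances `≥ k` and maximizes `∑_{h∈H} C(n,h)`,
then its least element is `< k`, consecutive elements differ by exactly `k`,
and its largest element is `> n - k`. -/
theorem maximizer_structure (n k : ℕ) (hk : 1 ≤ k) (hn : k ≤ n)
    (H : Finset ℕ) (hH : H ⊆ Finset.range (n + 1))
    (hdist : ∀ h ∈ H, ∀ h' ∈ H, h ≠ h' → (k : ℤ) ≤ |(h : ℤ) - (h' : ℤ)|)
    (hmax : ∀ H' : Finset ℕ, H' ⊆ Finset.range (n + 1) →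
      (∀ h ∈ H', ∀ h' ∈ H', h ≠ h' → (k : ℤ) ≤ |(h : ℤ) - (h' : ℤ)|) →
      ∑ h ∈ H', n.choose h ≤ ∑ h ∈ H, n.choose h) :
    (∀ h ∈ H, (∀ h' ∈ H, h ≤ h') → h < k) ∧
    (∀ h ∈ H, ∀ h' ∈ H, h < h' → (∀ x ∈ H, x ≤ h ∨ h' ≤ x) → h' - h = k) ∧
    (∀ h ∈ H, (∀ h' ∈ H, h' ≤ h) → n - k < h) := by
  have hdistN : ∀ a ∈ H, ∀ b ∈ H, a ≠ b → a + k ≤ b ∨ b + k ≤ a := by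
    intro a ha b hb hab
    exact nat_of_abs_dist (hdist a ha b hb hab)
  have hHn : ∀ a ∈ H, a ≤ n := by
    intro a ha
    have := hH ha
    simpa [Finset.mem_range, Nat.lt_succ_iff] using this
  refine ⟨?_, ?_, ?_⟩
  · -- least element < k
    intro h hh hmin
    by_contra hcon
    push_neg at hcon  -- k ≤ h
    have hhn : h ≤ n := hHn h hh
    have hnot : h - k ∉ H := by
      intro hmem
      have := hmin _ hmem
      omega
    set H' := insert (h - k) H with hH'def
    have hsub : H' ⊆ Finset.range (n + 1) := by
      intro x hx
      rcases Finset.mem_insert.mp hx with rfl | hx'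
      · exact Finset.mem_range.mpr (by omega)
      · exact hH hx'
    have hd' : ∀ a ∈ H', ∀ b ∈ H', a ≠ b → (k : ℤ) ≤ |(a : ℤ) - (b : ℤ)| := by
      intro a ha b hb hab
      rcases Finset.mem_insert.mp ha with rfl | ha' <;>
        rcases Finset.mem_insert.mp hb with rfl | hb'
      · omega
      · exact abs_dist_of_nat (by have := hmin _ hb'; omega)
      · exact abs_dist_of_nat (by have := hmin _ ha'; omega)
      · exact hdist a ha' b hb' hab
    have hsum : ∑ x ∈ H', n.choose x = n.choose (h - k) + ∑ x ∈ H, n.choose x :=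
      Finset.sum_insert hnot
    have hpos : 0 < n.choose (h - k) := Nat.choose_pos (by omega)
    have := hmax H' hsub hd'
    omega
  · -- consecutive gaps are exactly k
    intro h hh h' hh' hlt hcons
    by_contra hne
    have hhn : h ≤ n := hHn h hh
    have hh'n : h' ≤ n := hHn h' hh'
    have hsep : h + k ≤ h' := by
      have := hdistN h hh h' hh' (by omega)
      omega
    have hgap : h + k + 1 ≤ h' := by omega
    by_cases hc : n < h + k + h'
    · -- move h' down to h + k
      have hgain : n.choose h' < n.choose (h + k) :=
        choose_lt_of_lt_sum n (h + k) h' (by omega) hh'n (by omega)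
      have hnot : h + k ∉ H.erase h' := by
        intro hmem
        rcases Finset.mem_erase.mp hmem with ⟨_, hmem2⟩
        rcases hcons _ hmem2 with h1 | h1 <;> omega
      set H' := insert (h + k) (H.erase h') with hH'def
      have hsub : H' ⊆ Finset.range (n + 1) := by
        intro x hx
        rcases Finset.mem_insert.mp hx with rfl | hx'
        · exact Finset.mem_range.mpr (by omega)
        · exact hH (Finset.mem_of_mem_erase hx')
      have hd' : ∀ a ∈ H', ∀ b ∈ H', a ≠ b → (k : ℤ) ≤ |(a : ℤ) - (b : ℤ)| := by
        have key : ∀ b ∈ H.erase h', (h + k) + k ≤ b ∨ b + k ≤ h + k := by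
          intro b hb
          rcases Finset.mem_erase.mp hb with ⟨hbne, hbH⟩
          rcases hcons _ hbH with h1 | h1
          · right; omega
          · left
            have := hdistN h' hh' b hbH (by omega)
            omega
        intro a ha b hb hab
        rcases Finset.mem_insert.mp ha with rfl | ha' <;>
          rcases Finset.mem_insert.mp hb with rfl | hb'
        · omega
        · exact abs_dist_of_nat (by have := key b hb'; omega)
        · exact abs_dist_of_nat (by have := key a ha'; omega)
        · exact hdist a (Finset.mem_of_mem_erase ha') b (Finset.mem_of_mem_erase hb') hab
      have hsum : ∑ x ∈ H', n.choose x = n.choose (h + k) + ∑ x ∈ H.erase h', n.choose x :=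
        Finset.sum_insert hnot
      have hsum2 : ∑ x ∈ H.erase h', n.choose x + n.choose h' = ∑ x ∈ H, n.choose x :=
        Finset.sum_erase_add H _ hh'
      have := hmax H' hsub hd'
      omega
    · -- move h up to h' - k
      push_neg at hc
      have hgain : n.choose h < n.choose (h' - k) :=
        choose_lt_of_sum_lt n h (h' - k) (by omega) (by omega)
      have hnot : h' - k ∉ H.erase h := by
        intro hmem
        rcases Finset.mem_erase.mp hmem with ⟨_, hmem2⟩
        rcases hcons _ hmem2 with h1 | h1 <;> omega
      set H' := insert (h' - k) (H.erase h) with hH'def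
      have hsub : H' ⊆ Finset.range (n + 1) := by
        intro x hx
        rcases Finset.mem_insert.mp hx with rfl | hx'
        · exact Finset.mem_range.mpr (by omega)
        · exact hH (Finset.mem_of_mem_erase hx')
      have hd' : ∀ a ∈ H', ∀ b ∈ H', a ≠ b → (k : ℤ) ≤ |(a : ℤ) - (b : ℤ)| := by
        have key : ∀ b ∈ H.erase h, (h' - k) + k ≤ b ∨ b + k ≤ h' - k := by
          intro b hb
          rcases Finset.mem_erase.mp hb with ⟨hbne, hbH⟩
          rcases hcons _ hbH with h1 | h1
          · right
            have := hdistN h hh b hbH (by omega)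
            omega
          · left; omega
        intro a ha b hb hab
        rcases Finset.mem_insert.mp ha with rfl | ha' <;>
          rcases Finset.mem_insert.mp hb with rfl | hb'
        · omega
        · exact abs_dist_of_nat (by have := key b hb'; omega)
        · exact abs_dist_of_nat (by have := key a ha'; omega)
        · exact hdist a (Finset.mem_of_mem_erase ha') b (Finset.mem_of_mem_erase hb') hab
      have hsum : ∑ x ∈ H', n.choose x = n.choose (h' - k) + ∑ x ∈ H.erase h, n.choose x :=
        Finset.sum_insert hnot
      have hsum2 : ∑ x ∈ H.erase h, n.choose x + n.choose h = ∑ x ∈ H, n.choose x :=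
        Finset.sum_erase_add H _ hh
      have := hmax H' hsub hd'
      omega
  · -- greatest element > n - k
    intro h hh hmaxel
    by_contra hcon
    push_neg at hcon  -- h ≤ n - k
    have hhn : h ≤ n := hHn h hh
    have hhk : h + k ≤ n := by omega
    have hnot : h + k ∉ H := by
      intro hmem
      have := hmaxel _ hmem
      omega
    set H' := insert (h + k) H with hH'def
    have hsub : H' ⊆ Finset.range (n + 1) := by
      intro x hx
      rcases Finset.mem_insert.mp hx with rfl | hx'
      · exact Finset.mem_range.mpr (by omega)
      · exact hH hx'
    have hd' : ∀ a ∈ H', ∀ b ∈ H', a ≠ b → (k : ℤ) ≤ |(a : ℤ) - (b : ℤ)| := by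
      intro a ha b hb hab
      rcases Finset.mem_insert.mp ha with rfl | ha' <;>
        rcases Finset.mem_insert.mp hb with rfl | hb'
      · omega
      · exact abs_dist_of_nat (by have := hmaxel _ hb'; omega)
      · exact abs_dist_of_nat (by have := hmaxel _ ha'; omega)
      · exact hdist a ha' b hb' hab
    have hsum : ∑ x ∈ H', n.choose x = n.choose (h + k) + ∑ x ∈ H, n.choose x :=
      Finset.sum_insert hnot
    have hpos : 0 < n.choose (h + k) := Nat.choose_pos (by omega)
    have := hmax H' hsub hd'
    omega
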